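/- A right noetherian ring R is right FBN if and only if every finitely generated right R-module is an FBN module. -/

import Mathlib

open MulOpposite

/-- A ring `S` is right bounded if every essential right ideal of `S` contains a
nonzero two-sided ideal. Right ideals of `S` are `Sᵐᵒᵖ`-submodules of `S`. -/
def RightBounded (S : Type*) [Ring S] : Prop :=
  ∀ E : Submodule Sᵐᵒᵖ S,
    (∀ J : Submodule Sᵐᵒᵖ S, J ≠ ⊥ → E ⊓ J ≠ ⊥) →
    ∃ T : TwoSidedIdeal S, T ≠ ⊥ ∧ ∀ x ∈ T, x ∈ E

/-- A two-sided ideal `P` of a ring `S` is prime if `P ≠ S` and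
`a S b ⊆ P` implies `a ∈ P` or `b ∈ P`. -/
def TwoSidedIdeal.IsPrimeTSI {S : Type*} [Ring S] (P : TwoSidedIdeal S) : Prop :=
  P ≠ ⊤ ∧ ∀ a b : S, (∀ r : S, a * r * b ∈ P) → a ∈ P ∨ b ∈ P

/-- A ring `S` is right FBN (fully bounded noetherian) if `S` is right noetherian and
`S/P` is right bounded for every two-sided prime ideal `P` of `S`. -/
def RightFBN (S : Type*) [Ring S] : Prop :=
  IsNoetherianRing Sᵐᵒᵖ ∧
  ∀ P : TwoSidedIdeal S, P.IsPrimeTSI → RightBounded P.ringCon.Quotient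

/-- A right `R`-module `M` is `P`-faithful if `Hom_R(P, M') ≠ 0` for every nonzero
submodule `M' ⊆ M`. -/
def IsPFaithful (R : Type u) [Ring R] (P : Type u) [AddCommGroup P] [Module Rᵐᵒᵖ P]
    (M : Type u) [AddCommGroup M] [Module Rᵐᵒᵖ M] : Prop :=
  ∀ M' : Submodule Rᵐᵒᵖ M, M' ≠ ⊥ →
    ∃ f : P →ₗ[Rᵐᵒᵖ] M, f ≠ 0 ∧ LinearMap.range f ≤ M'

/-- A right `R`-module `P` is a right FBN-module if it is noetherian and for every
finitely generated `P`-faithful right `R`-module `M` there is a finite subset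
`F ⊆ Hom_R(P, M)` with `r_P(F) = r_P(Hom_R(P, M))`, where `r_P(X) = ⋂_{f ∈ X} ker f`. -/
def RightFBNModule (R : Type u) [Ring R] (P : Type u) [AddCommGroup P]
    [Module Rᵐᵒᵖ P] : Prop :=
  IsNoetherian Rᵐᵒᵖ P ∧
  ∀ (M : Type u) (_ : AddCommGroup M) (_ : Module Rᵐᵒᵖ M),
    Module.Finite Rᵐᵒᵖ M → IsPFaithful R P M →
    ∃ F : Finset (P →ₗ[Rᵐᵒᵖ] M),
      (⨅ f ∈ F, LinearMap.ker f) = ⨅ f : P →ₗ[Rᵐᵒᵖ] M, LinearMap.ker f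


def Esst {S : Type*} [Ring S] (E : Submodule Sᵐᵒᵖ S) : Prop :=
  ∀ J : Submodule Sᵐᵒᵖ S, J ≠ ⊥ → E ⊓ J ≠ ⊥

namespace Esst
variable {S : Type*} [Ring S]

lemma top : Esst (⊤ : Submodule Sᵐᵒᵖ S) := fun J hJ => by simpa using hJ

lemma inf {E₁ E₂ : Submodule Sᵐᵒᵖ S} (h₁ : Esst E₁) (h₂ : Esst E₂) : Esst (E₁ ⊓ E₂) := by
  intro J hJ
  rw [inf_assoc]
  exact h₁ _ (h₂ _ hJ)

lemma ne_bot [Nontrivial S] {E : Submodule Sᵐᵒᵖ S} (h : Esst E) : E ≠ ⊥ := by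
  have := h ⊤ bot_ne_top.symm
  simpa using this

def colL (y : S) (E : Submodule Sᵐᵒᵖ S) : Submodule Sᵐᵒᵖ S where
  carrier := {σ | y * σ ∈ E}
  add_mem' := by intro a b ha hb; simp only [Set.mem_setOf_eq, mul_add] at *; exact E.add_mem ha hb
  zero_mem' := by simp
  smul_mem' := by
    intro τ σ hσ
    show y * (σ * τ.unop) ∈ E
    rw [← mul_assoc]
    exact E.smul_mem τ hσ

lemma mem_colL {y σ : S} {E : Submodule Sᵐᵒᵖ S} : σ ∈ colL y E ↔ y * σ ∈ E := Iff.rfl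

lemma colL_esst {E : Submodule Sᵐᵒᵖ S} (hE : Esst E) (y : S) : Esst (colL y E) := by
  intro J hJ
  by_cases h : ∀ σ ∈ J, y * σ = 0
  · have hle : J ≤ colL y E := fun σ hσ => by simp [mem_colL, h σ hσ]
    rw [inf_eq_right.2 hle]; exact hJ
  · push_neg at h
    obtain ⟨σ₀, hσ₀J, hσ₀⟩ := h
    let yJ : Submodule Sᵐᵒᵖ S :=
      { carrier := {τ | ∃ σ ∈ J, τ = y * σ}
        add_mem' := by
          rintro a b ⟨sa, hsa, rfl⟩ ⟨sb, hsb, rfl⟩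
          exact ⟨sa + sb, J.add_mem hsa hsb, by rw [mul_add]⟩
        zero_mem' := ⟨0, J.zero_mem, by simp⟩
        smul_mem' := by
          rintro τ a ⟨sa, hsa, rfl⟩
          exact ⟨sa * τ.unop, J.smul_mem τ hsa, mul_assoc y sa (unop τ)⟩ }
    have hyJ : yJ ≠ ⊥ := by
      rw [Submodule.ne_bot_iff]
      exact ⟨y * σ₀, ⟨σ₀, hσ₀J, rfl⟩, hσ₀⟩
    obtain ⟨τ, hτ, hτ0⟩ := Submodule.ne_bot_iff _ |>.1 (hE yJ hyJ)
    obtain ⟨hτE, σ, hσJ, rfl⟩ := hτ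
    rw [Submodule.ne_bot_iff]
    refine ⟨σ, ⟨hτE, hσJ⟩, ?_⟩
    rintro rfl; simp at hτ0

lemma finset_inf {ι : Type*} (F : Finset ι) (G : ι → Submodule Sᵐᵒᵖ S)
    (hG : ∀ i ∈ F, Esst (G i)) : Esst (F.inf G) := by
  classical
  induction F using Finset.induction_on with
  | empty => simpa using top
  | @insert a s ha ih =>
    rw [Finset.inf_insert]
    exact (hG a (Finset.mem_insert_self a s)).inf
      (ih fun i hi => hG i (Finset.mem_insert_of_mem hi))

end Esst

section Forward
variable {R : Type u} [Ring R]
variable {V M : Type u} [AddCommGroup V] [Module Rᵐᵒᵖ V] [AddCommGroup M] [Module Rᵐᵒᵖ M]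

lemma op_smul_op {W : Type u} [AddCommGroup W] [Module Rᵐᵒᵖ W] (x y : R) (v : W) :
    op x • (op y • v) = op (y * x) • v := by
  rw [smul_smul, ← op_mul]

theorem key_lemma (hnoeth : IsNoetherianRing Rᵐᵒᵖ)
    (hb : ∀ P : TwoSidedIdeal R, P.IsPrimeTSI → RightBounded P.ringCon.Quotient)
    [IsNoetherian Rᵐᵒᵖ M]
    (V₀ : Submodule Rᵐᵒᵖ V)
    (hV₀ : ¬ V₀ ≤ ⨅ (f : V →ₗ[Rᵐᵒᵖ] M), LinearMap.ker f) :
    ∃ (g : V →ₗ[Rᵐᵒᵖ] M) (C : Submodule Rᵐᵒᵖ V), C ≤ V₀ ∧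
      ¬ C ≤ (⨅ (f : V →ₗ[Rᵐᵒᵖ] M), LinearMap.ker f) ∧
      C ⊓ LinearMap.ker g ≤ ⨅ (f : V →ₗ[Rᵐᵒᵖ] M), LinearMap.ker f := by
  classical
  set K := ⨅ (f : V →ₗ[Rᵐᵒᵖ] M), LinearMap.ker f with hK
  have hKg : ∀ g : V →ₗ[Rᵐᵒᵖ] M, K ≤ LinearMap.ker g := fun g => iInf_le _ g
  by_contra hcon
  push_neg at hcon
  -- hcon : ∀ g C, C ≤ V₀ → ¬C ≤ K → ¬(C ⊓ ker g ≤ K)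
  -- the colon "ideal" of a submodule
  let col : Submodule Rᵐᵒᵖ V → Submodule Rᵐᵒᵖ Rᵐᵒᵖ := fun C =>
    { carrier := {ρ | ∀ c ∈ C, ρ • c ∈ K}
      add_mem' := by
        intro a b ha hb c hc
        rw [add_smul]; exact K.add_mem (ha c hc) (hb c hc)
      zero_mem' := by intro c hc; rw [zero_smul]; exact K.zero_mem
      smul_mem' := by
        intro τ ρ hρ c hc
        rw [smul_eq_mul, mul_smul]
        exact K.smul_mem τ (hρ c hc) }
  have hmemcol : ∀ (ρ : Rᵐᵒᵖ) (C : Submodule Rᵐᵒᵖ V), ρ ∈ col C ↔ ∀ c ∈ C, ρ • c ∈ K :=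
    fun ρ C => Iff.rfl
  -- maximal colon ideal
  have hmax : ∃ J₀ ∈ {J | ∃ C, C ≤ V₀ ∧ ¬ C ≤ K ∧ J = col C},
      ∀ I ∈ {J | ∃ C, C ≤ V₀ ∧ ¬ C ≤ K ∧ J = col C}, ¬ J₀ < I := by
    haveI : IsNoetherian Rᵐᵒᵖ Rᵐᵒᵖ := hnoeth
    exact set_has_maximal_iff_noetherian.2 this _ ⟨col V₀, V₀, le_refl _, hV₀, rfl⟩
  obtain ⟨J₀, ⟨C, hCV₀, hCK, hJ₀⟩, hmaxJ⟩ := hmax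
  -- P₀ as a two-sided ideal of R
  have hcol_mul : ∀ (ρ τ : Rᵐᵒᵖ), ρ ∈ J₀ → ρ * τ ∈ J₀ := by
    intro ρ τ hρ
    rw [hJ₀] at hρ ⊢
    intro c hc
    rw [mul_smul]
    exact hρ _ (C.smul_mem τ hc)
  let P₀ : TwoSidedIdeal R := TwoSidedIdeal.mk' {r | op r ∈ J₀}
    (by show op (0:R) ∈ J₀; rw [op_zero]; exact J₀.zero_mem)
    (by intro x y hx hy; show op (x + y) ∈ J₀; rw [op_add]; exact J₀.add_mem hx hy)
    (by intro x hx; show op (-x) ∈ J₀; rw [op_neg]; exact J₀.neg_mem hx)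
    (by intro x y hy; show op (x * y) ∈ J₀; rw [op_mul]; exact hcol_mul _ _ hy)
    (by intro x y hx; show op (x * y) ∈ J₀; rw [op_mul]; exact J₀.smul_mem (op y) hx)
  have hmemP₀ : ∀ r : R, r ∈ P₀ ↔ ∀ c ∈ C, (op r) • c ∈ K := by
    intro r
    rw [TwoSidedIdeal.mem_mk']
    show op r ∈ J₀ ↔ _
    rw [hJ₀]
    rfl
  have hone : (1 : R) ∉ P₀ := by
    intro h1
    apply hCK
    intro c hc
    have := (hmemP₀ 1).1 h1 c hc
    rwa [op_one, one_smul] at this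
  -- P₀ is prime
  have hprime : P₀.IsPrimeTSI := by
    constructor
    · intro htop
      apply hone
      rw [htop]
      exact TwoSidedIdeal.mem_top _
    · intro a b hab
      by_cases ha : a ∈ P₀
      · exact Or.inl ha
      right
      -- the submodule D spanned by C·a·R
      have hnc : ∃ c ∈ C, ¬ (op a • c ∈ K) := by
        by_contra h
        push_neg at h
        exact ha ((hmemP₀ a).2 h)
      obtain ⟨c₀, hc₀C, hc₀⟩ := hnc
      let Dgen : Set V := {v | ∃ c ∈ C, ∃ s : R, v = op (a * s) • c}
      let D : Submodule Rᵐᵒᵖ V := Submodule.span Rᵐᵒᵖ Dgen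
      have hDC : D ≤ C := by
        rw [Submodule.span_le]
        rintro v ⟨c, hc, s, rfl⟩
        exact C.smul_mem _ hc
      have hDK : ¬ D ≤ K := by
        intro h
        apply hc₀
        have hmem : op a • c₀ ∈ D := by
          apply Submodule.subset_span
          exact ⟨c₀, hc₀C, 1, by rw [mul_one]⟩
        exact h hmem
      have hcolCD : col C ≤ col D := fun ρ hρ d hd => hρ d (hDC hd)
      have hcolD : col D = J₀ := by
        have hmem : col D ∈ {J | ∃ C, C ≤ V₀ ∧ ¬ C ≤ K ∧ J = col C} :=
          ⟨D, hDC.trans hCV₀, hDK, rfl⟩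
        have hle : J₀ ≤ col D := hJ₀ ▸ hcolCD
        by_contra hne
        exact hmaxJ _ hmem (lt_of_le_of_ne hle (fun h => hne h.symm))
      -- b kills D
      let Q : Submodule Rᵐᵒᵖ V :=
        { carrier := {d | ∀ s' : R, op (s' * b) • d ∈ K}
          add_mem' := by
            intro x y hx hy s'
            rw [smul_add]; exact K.add_mem (hx s') (hy s')
          zero_mem' := by intro s'; rw [smul_zero]; exact K.zero_mem
          smul_mem' := by
            intro τ d hd s'
            have h1 : op (s' * b) • (τ • d) = (op (s' * b) * τ) • d := smul_smul _ _ _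
            have h2 : op (s' * b) * τ = op ((τ.unop * s') * b) := by
              conv_rhs => rw [mul_assoc, op_mul, op_unop]
            rw [h1, h2]
            exact hd (τ.unop * s') }
      have hDQ : D ≤ Q := by
        rw [Submodule.span_le]
        rintro v ⟨c, hc, s, rfl⟩ s'
        rw [op_smul_op]
        have harr : (a * s) * (s' * b) = a * (s * s') * b := by simp only [mul_assoc]
        rw [harr]
        exact (hmemP₀ _).1 (hab (s * s')) c hc
      show b ∈ P₀
      rw [TwoSidedIdeal.mem_mk']
      show op b ∈ J₀
      rw [← hcolD]
      intro d hd
      have := hDQ hd 1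
      rwa [one_mul] at this
  -- quotient ring S
  set S := P₀.ringCon.Quotient with hSdef
  let π : R →+* S := P₀.ringCon.mk'
  have hπsurj : Function.Surjective π := Quotient.mk''_surjective
  have hπ0 : ∀ r : R, π r = 0 ↔ r ∈ P₀ := by
    intro r
    rw [TwoSidedIdeal.mem_iff]
    exact ⟨fun h => Quotient.eq''.1 h, fun h => Quotient.sound' h⟩
  have hone' : (1 : S) ≠ 0 := by
    intro h
    exact hone ((hπ0 1).1 (by simpa using h))
  haveI : Nontrivial S := ⟨1, 0, hone'⟩
  have hbound := hb P₀ hprime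
  have hlift : ∀ r r' : R, π r = π r' → r - r' ∈ P₀ := by
    intro r r' h
    rw [← hπ0, map_sub, h, sub_self]
  have hsplit : ∀ (x y : R) (v : V), op (x + y) • v = op x • v + op y • v := by
    intro x y v; rw [op_add, add_smul]
  -- Kill predicate
  let Kill : M → S → Prop := fun t σ => ∀ r : R, π r = σ → (op r) • t = 0
  -- singular elements form a submodule
  let SingSet : Submodule Rᵐᵒᵖ M :=
    { carrier := {t | ∃ E : Submodule Sᵐᵒᵖ S, Esst E ∧ ∀ σ ∈ E, Kill t σ}
      zero_mem' := ⟨⊤, Esst.top, fun σ _ r _ => smul_zero _⟩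
      add_mem' := by
        rintro t t' ⟨E₁, hE₁, hk₁⟩ ⟨E₂, hE₂, hk₂⟩
        refine ⟨E₁ ⊓ E₂, hE₁.inf hE₂, ?_⟩
        rintro σ ⟨hσ₁, hσ₂⟩ r hr
        rw [smul_add, hk₁ σ hσ₁ r hr, hk₂ σ hσ₂ r hr, add_zero]
      smul_mem' := by
        rintro ρ t ⟨E, hE, hk⟩
        refine ⟨Esst.colL (π ρ.unop) E, Esst.colL_esst hE _, ?_⟩
        intro σ hσ r hr
        have h1 : (op r) • (ρ • t) = op (ρ.unop * r) • t := by
          rw [smul_smul]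
          congr 1
        rw [h1]
        exact hk _ hσ (ρ.unop * r) (by rw [map_mul, hr]) }
  have hSing_gc : ∀ (g : V →ₗ[Rᵐᵒᵖ] M) (c : V), c ∈ C → g c ∈ SingSet := by
    intro g c hc
    let Egc : Submodule Sᵐᵒᵖ S :=
      { carrier := {σ | ∀ r : R, π r = σ → (op r) • c ∈ LinearMap.ker g}
        zero_mem' := by
          intro r hr
          exact hKg g ((hmemP₀ r).1 ((hπ0 r).1 hr) c hc)
        add_mem' := by
          intro σ₁ σ₂ h₁ h₂ r hr
          obtain ⟨r₁, hr₁⟩ := hπsurj σ₁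
          obtain ⟨r₂, hr₂⟩ := hπsurj σ₂
          have hd : r - (r₁ + r₂) ∈ P₀ := hlift _ _ (by rw [hr, map_add, hr₁, hr₂])
          have hre : op r • c = op (r₁ + r₂) • c + op (r - (r₁ + r₂)) • c := by
            rw [← hsplit]
            congr 2
            abel
          rw [hre, hsplit]
          exact (LinearMap.ker g).add_mem
            ((LinearMap.ker g).add_mem (h₁ r₁ hr₁) (h₂ r₂ hr₂))
            (hKg g ((hmemP₀ _).1 hd c hc))
        smul_mem' := by
          intro τ σ hσ r hr
          obtain ⟨u, hu⟩ := hπsurj τ.unop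
          obtain ⟨r₁, hr₁⟩ := hπsurj σ
          have hπr : π r = π (r₁ * u) := by
            rw [map_mul, hr₁, hu, hr]
            rfl
          have hd : r - r₁ * u ∈ P₀ := hlift _ _ hπr
          have hre : op r • c = op (r₁ * u) • c + op (r - r₁ * u) • c := by
            rw [← hsplit]
            congr 2
            abel
          rw [hre]
          refine (LinearMap.ker g).add_mem ?_ (hKg g ((hmemP₀ _).1 hd c hc))
          rw [← op_smul_op]
          exact (LinearMap.ker g).smul_mem (op u) (hσ r₁ hr₁) }
    refine ⟨Egc, ?_, ?_⟩
    · -- essential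
      intro J hJ
      let DJ : Submodule Rᵐᵒᵖ V :=
        { carrier := {v | ∃ r : R, π r ∈ J ∧ v = op r • c}
          zero_mem' := ⟨0, by rw [map_zero]; exact ⟨J.zero_mem, by rw [op_zero, zero_smul]⟩⟩
          add_mem' := by
            rintro v w ⟨r₁, h₁, rfl⟩ ⟨r₂, h₂, rfl⟩
            exact ⟨r₁ + r₂, by rw [map_add]; exact J.add_mem h₁ h₂, by rw [op_add, add_smul]⟩
          smul_mem' := by
            rintro ρ v ⟨r, hr, rfl⟩
            refine ⟨r * ρ.unop, ?_, ?_⟩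
            · rw [map_mul]
              exact J.smul_mem (op (π ρ.unop)) hr
            · conv_lhs => rw [← op_unop ρ]
              rw [op_smul_op] }
      have hDJC : DJ ≤ C := by
        rintro v ⟨r, hr, rfl⟩
        exact C.smul_mem _ hc
      by_cases hDJ : DJ ≤ K
      · obtain ⟨σ₀, hσ₀J, hσ₀⟩ := Submodule.ne_bot_iff _ |>.1 hJ
        rw [Submodule.ne_bot_iff]
        refine ⟨σ₀, ⟨?_, hσ₀J⟩, hσ₀⟩
        intro r hr
        exact hKg g (hDJ ⟨r, hr ▸ hσ₀J, rfl⟩)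
      · have hnle := hcon g DJ (hDJC.trans hCV₀) hDJ
        obtain ⟨v, hvmem, hvK⟩ := SetLike.not_le_iff_exists.1 hnle
        obtain ⟨⟨r, hrJ, rfl⟩, hvker⟩ := hvmem
        rw [Submodule.ne_bot_iff]
        refine ⟨π r, ⟨?_, hrJ⟩, ?_⟩
        · intro r' hr'
          have hd : r' - r ∈ P₀ := hlift _ _ hr'
          have hre : op r' • c = op r • c + op (r' - r) • c := by
            rw [← hsplit]
            congr 2
            abel
          rw [hre]
          exact (LinearMap.ker g).add_mem hvker (hKg g ((hmemP₀ _).1 hd c hc))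
        · intro h0
          exact hvK ((hmemP₀ r).1 ((hπ0 r).1 h0) c hc)
    · -- kill property
      intro σ hσ r hr
      have h1 := hσ r hr
      rw [LinearMap.mem_ker] at h1
      rw [← map_smul]
      exact h1
  -- the trace of C in M
  let Tsub : Submodule Rᵐᵒᵖ M := ⨆ g : V →ₗ[Rᵐᵒᵖ] M, Submodule.map g C
  have hTsing : Tsub ≤ SingSet := by
    apply iSup_le
    intro g
    rw [Submodule.map_le_iff_le_comap]
    intro c hc
    exact hSing_gc g c hc
  obtain ⟨G, hG⟩ := IsNoetherian.noetherian Tsub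
  have hGsing : ∀ t ∈ G, t ∈ SingSet := by
    intro t ht
    apply hTsing
    rw [← hG]
    exact Submodule.subset_span ht
  -- the quotient is a prime ring
  have hSprime : ∀ x y : S, x ≠ 0 → y ≠ 0 → ∃ z : S, x * z * y ≠ 0 := by
    intro x y hx hy
    obtain ⟨a, rfl⟩ := hπsurj x
    obtain ⟨b, rfl⟩ := hπsurj y
    have ha : a ∉ P₀ := fun h => hx ((hπ0 a).2 h)
    have hb' : b ∉ P₀ := fun h => hy ((hπ0 b).2 h)
    have hno : ¬ ∀ r : R, a * r * b ∈ P₀ := by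
      intro h
      rcases hprime.2 a b h with h' | h'
      · exact ha h'
      · exact hb' h'
    push_neg at hno
    obtain ⟨r, hr⟩ := hno
    refine ⟨π r, ?_⟩
    rw [← map_mul, ← map_mul]
    exact fun h => hr ((hπ0 _).1 h)
  have hTne : ∀ T : TwoSidedIdeal S, T ≠ ⊥ → ∃ a ∈ T, a ≠ 0 := by
    intro T hT
    by_contra h
    push_neg at h
    apply hT
    refine SetLike.ext fun x => ⟨fun hx => (TwoSidedIdeal.mem_bot S).2 (h x hx), fun hx => ?_⟩
    rw [(TwoSidedIdeal.mem_bot S).1 hx]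
    exact T.zero_mem
  -- combine bounded ideals over the finite generating set
  have hcomb : ∀ G' : Finset M, (∀ t ∈ G', t ∈ SingSet) →
      ∃ I : TwoSidedIdeal S, I ≠ ⊥ ∧ ∀ σ ∈ I, ∀ t ∈ G', Kill t σ := by
    intro G'
    induction G' using Finset.induction_on with
    | empty =>
      intro _
      refine ⟨⊤, ?_, fun σ _ t ht => absurd ht (Finset.notMem_empty t)⟩
      intro h
      have h1 : (1 : S) ∈ (⊤ : TwoSidedIdeal S) := TwoSidedIdeal.mem_top S
      rw [h] at h1
      exact hone' ((TwoSidedIdeal.mem_bot S).1 h1)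
    | @insert t₀ G' ht₀ ih =>
      intro hall
      obtain ⟨E₀, hE₀, hk₀⟩ := hall t₀ (Finset.mem_insert_self _ _)
      obtain ⟨I', hI', hkI'⟩ := ih (fun t ht => hall t (Finset.mem_insert_of_mem ht))
      obtain ⟨T₀, hT₀, hT₀E⟩ := hbound E₀ hE₀
      obtain ⟨aa, haT, ha0⟩ := hTne T₀ hT₀
      obtain ⟨bb, hbI, hb0⟩ := hTne I' hI'
      obtain ⟨z, hz⟩ := hSprime aa bb ha0 hb0
      refine ⟨T₀ ⊓ I', ?_, ?_⟩
      · intro h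
        apply hz
        have hmem : aa * z * bb ∈ T₀ ⊓ I' := (TwoSidedIdeal.mem_inf S).2
          ⟨T₀.mul_mem_right _ _ (T₀.mul_mem_right _ _ haT), I'.mul_mem_left _ _ hbI⟩
        rw [h] at hmem
        exact (TwoSidedIdeal.mem_bot S).1 hmem
      · intro σ hσ t ht
        rcases (TwoSidedIdeal.mem_inf S).1 hσ with ⟨hσT, hσI⟩
        rcases Finset.mem_insert.1 ht with rfl | ht'
        · exact hk₀ σ (hT₀E σ hσT)
        · exact hkI' σ hσI t ht'
  obtain ⟨I, hIne, hIkill⟩ := hcomb G hGsing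
  obtain ⟨xb, hxI, hx0⟩ := hTne I hIne
  obtain ⟨x, rfl⟩ := hπsurj xb
  let Z : Submodule Rᵐᵒᵖ M :=
    { carrier := {t | ∀ y : R, π y ∈ I → op y • t = 0}
      zero_mem' := fun y _ => smul_zero _
      add_mem' := by
        intro t t' ht ht' y hy
        rw [smul_add, ht y hy, ht' y hy, add_zero]
      smul_mem' := by
        intro ρ t ht y hy
        have h1 : op y • (ρ • t) = op (ρ.unop * y) • t := by
          rw [smul_smul]
          congr 1
        rw [h1]
        exact ht (ρ.unop * y) (by rw [map_mul]; exact I.mul_mem_left _ _ hy) }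
  have hGZ : ∀ t ∈ (G : Set M), t ∈ Z := by
    intro t ht y hy
    exact hIkill (π y) hy t ht y rfl
  have hTZ : Tsub ≤ Z := by
    rw [← hG]
    exact Submodule.span_le.2 hGZ
  have hxP : x ∈ P₀ := by
    rw [hmemP₀]
    intro c hc
    rw [hK, Submodule.mem_iInf]
    intro g
    rw [LinearMap.mem_ker, map_smul]
    have hgc : g c ∈ Tsub :=
      le_iSup (fun g : V →ₗ[Rᵐᵒᵖ] M => Submodule.map g C) g (Submodule.mem_map_of_mem hc)
    exact hTZ hgc x hxI
  exact hx0 ((hπ0 x).2 hxP)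

theorem forward_main (hnoeth : IsNoetherianRing Rᵐᵒᵖ)
    (hb : ∀ P : TwoSidedIdeal R, P.IsPrimeTSI → RightBounded P.ringCon.Quotient)
    [Module.Finite Rᵐᵒᵖ V] [Module.Finite Rᵐᵒᵖ M] :
    ∃ F : Finset (V →ₗ[Rᵐᵒᵖ] M),
      (⨅ f ∈ F, LinearMap.ker f) = ⨅ f : V →ₗ[Rᵐᵒᵖ] M, LinearMap.ker f := by
  classical
  haveI hNV : IsNoetherian Rᵐᵒᵖ V := isNoetherian_of_isNoetherianRing_of_finite Rᵐᵒᵖ V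
  haveI hNM : IsNoetherian Rᵐᵒᵖ M := isNoetherian_of_isNoetherianRing_of_finite Rᵐᵒᵖ M
  set K := ⨅ f : V →ₗ[Rᵐᵒᵖ] M, LinearMap.ker f with hK
  have hKle : ∀ F : Finset (V →ₗ[Rᵐᵒᵖ] M), K ≤ ⨅ f ∈ F, LinearMap.ker f :=
    fun F => le_iInf fun f => le_iInf fun _ => iInf_le _ f
  obtain ⟨G₀, ⟨F₀, hF₀⟩, hmaxG⟩ :=
    set_has_maximal_iff_noetherian.2 hNV
      {G : Submodule Rᵐᵒᵖ V | ∃ F : Finset (V →ₗ[Rᵐᵒᵖ] M),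
        G ⊓ (⨅ f ∈ F, LinearMap.ker f) ≤ K}
      ⟨⊥, ∅, by simp⟩
  refine ⟨F₀, le_antisymm ?_ (hKle F₀)⟩
  by_contra hne
  obtain ⟨g, C, hCV₀, hCK, hCg⟩ := key_lemma hnoeth hb (⨅ f ∈ F₀, LinearMap.ker f) hne
  have hmem : (G₀ ⊔ C) ∈ {G : Submodule Rᵐᵒᵖ V | ∃ F : Finset (V →ₗ[Rᵐᵒᵖ] M),
      G ⊓ (⨅ f ∈ F, LinearMap.ker f) ≤ K} := by
    refine ⟨insert g F₀, ?_⟩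
    rw [Finset.iInf_insert]
    rintro x ⟨hxG, hxk⟩
    rcases Submodule.mem_sup.1 hxG with ⟨a, haG, c, hcC, rfl⟩
    obtain ⟨hxg, hxF⟩ := hxk
    have hcV : c ∈ ⨅ f ∈ F₀, LinearMap.ker f := hCV₀ hcC
    have haF : a ∈ ⨅ f ∈ F₀, LinearMap.ker f := by
      have hsub : a = (a + c) - c := by abel
      rw [hsub]
      exact Submodule.sub_mem _ hxF hcV
    have haK : a ∈ K := hF₀ ⟨haG, haF⟩
    have hcg : c ∈ LinearMap.ker g := by
      have hsub : c = (a + c) - a := by abel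
      rw [hsub]
      exact Submodule.sub_mem _ hxg (iInf_le (fun f : V →ₗ[Rᵐᵒᵖ] M => LinearMap.ker f) g haK)
    have hcK : c ∈ K := hCg ⟨hcC, hcg⟩
    exact K.add_mem haK hcK
  have heq : G₀ ⊔ C = G₀ := by
    by_contra hneq
    exact hmaxG _ hmem (lt_of_le_of_ne le_sup_left (fun h => hneq h.symm))
  apply hCK
  intro c hc
  have hcG : c ∈ G₀ := by
    rw [← heq]
    exact (le_sup_right : C ≤ G₀ ⊔ C) hc
  exact hF₀ ⟨hcG, hCV₀ hc⟩

end Forward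

section Back
variable {R : Type u} [Ring R]

theorem backward_bounded
    (P : TwoSidedIdeal R) (hP : P.IsPrimeTSI)
    (H : ∀ (N : Type u) (_ : AddCommGroup N) (_ : Module Rᵐᵒᵖ N),
      Module.Finite Rᵐᵒᵖ N → RightFBNModule R N) :
    RightBounded P.ringCon.Quotient := by
  classical
  set S := P.ringCon.Quotient with hS
  let π : R →+* S := P.ringCon.mk'
  have hπsurj : Function.Surjective π := Quotient.mk''_surjective
  have hmemP : ∀ r : R, r ∈ P ↔ π r = 0 := by
    intro r
    rw [TwoSidedIdeal.mem_iff]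
    exact ⟨fun h => Quotient.sound' h, fun h => Quotient.eq''.1 h⟩
  have hone : (1 : S) ≠ 0 := by
    intro h
    have h1 : (1 : R) ∈ P := by rw [hmemP]; simpa using h
    exact hP.1 (eq_top_iff.2 fun x _ => by simpa using P.mul_mem_left x 1 h1)
  haveI : Nontrivial S := ⟨1, 0, hone⟩
  letI instRS : Module Rᵐᵒᵖ S := Module.compHom S (RingHom.op π)
  have hsmulS : ∀ (r : Rᵐᵒᵖ) (σ : S), r • σ = σ * π r.unop := fun r σ => rfl
  intro E hE
  -- E as an Rᵐᵒᵖ-submodule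
  let E' : Submodule Rᵐᵒᵖ S :=
    { carrier := E
      add_mem' := fun ha hb => E.add_mem ha hb
      zero_mem' := E.zero_mem
      smul_mem' := by
        intro r x hx
        show r • x ∈ (E : Set S)
        rw [hsmulS]
        exact E.smul_mem (op (π r.unop)) hx }
  have hmemE' : ∀ z : S, z ∈ E' ↔ z ∈ E := fun z => Iff.rfl
  have hfinS : Module.Finite Rᵐᵒᵖ S := by
    constructor
    refine ⟨{1}, ?_⟩
    rw [eq_top_iff]
    rintro σ -
    obtain ⟨r, rfl⟩ := hπsurj σ
    have h1 : π r = (op r) • (1 : S) := by rw [hsmulS]; simp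
    rw [h1]
    exact Submodule.smul_mem _ _ (Submodule.subset_span (by simp))
  let M := S ⧸ E'
  have hmk0 : ∀ z : S, (Submodule.Quotient.mk z : M) = 0 ↔ z ∈ E :=
    fun z => Submodule.Quotient.mk_eq_zero E'
  -- right multiplication maps
  let rmul : S → (S →ₗ[Rᵐᵒᵖ] M) := fun y =>
    { toFun := fun σ => Submodule.Quotient.mk (y * σ)
      map_add' := by
        intro a b
        show Submodule.Quotient.mk (y * (a + b))
          = Submodule.Quotient.mk (y * a) + Submodule.Quotient.mk (y * b)
        rw [mul_add]
        rfl
      map_smul' := by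
        intro r σ
        show Submodule.Quotient.mk (y * (r • σ)) = r • Submodule.Quotient.mk (y * σ)
        rw [show y * (r • σ) = r • (y * σ) from (mul_assoc y σ (π r.unop)).symm,
          Submodule.Quotient.mk_smul] }
  have hrmul : ∀ (y σ : S), rmul y σ = Submodule.Quotient.mk (y * σ) := fun y σ => rfl
  have hfinM : Module.Finite Rᵐᵒᵖ M :=
    Module.Finite.of_surjective E'.mkQ (Submodule.mkQ_surjective E')
  have hfaithful : IsPFaithful R S M := by
    intro M' hM'
    obtain ⟨x, hxM', hx0⟩ := Submodule.ne_bot_iff _ |>.1 hM'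
    obtain ⟨y₀, rfl⟩ := Submodule.Quotient.mk_surjective E' x
    refine ⟨rmul y₀, ?_, ?_⟩
    · intro h
      apply hx0
      have := congrArg (fun f => f 1) h
      simpa [hrmul] using this
    · rintro z ⟨σ, rfl⟩
      obtain ⟨r, rfl⟩ := hπsurj σ
      rw [hrmul]
      rw [show y₀ * π r = (op r) • y₀ from rfl]
      exact Submodule.Quotient.mk_smul E' (op r) y₀ ▸ M'.smul_mem (op r) hxM'
  obtain ⟨F, hF⟩ := (H S _ _ hfinS).2 M _ _ hfinM hfaithful
  -- every hom is a right multiplication determined by its value at 1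
  have hhom : ∀ f : S →ₗ[Rᵐᵒᵖ] M, ∃ y : S,
      ∀ σ : S, f σ = Submodule.Quotient.mk (y * σ) := by
    intro f
    obtain ⟨y, hy⟩ := Submodule.Quotient.mk_surjective E' (f 1)
    refine ⟨y, fun σ => ?_⟩
    obtain ⟨r, rfl⟩ := hπsurj σ
    have h1 : π r = (op r) • (1 : S) := by rw [hsmulS]; simp
    have h2 : f (π r) = (op r) • f 1 := by rw [h1, map_smul]
    rw [h2, ← hy]
    rfl
  choose yf hyf using hhom
  have hWess : Esst (F.inf fun f => Esst.colL (yf f) E) :=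
    Esst.finset_inf F _ (fun f _ => Esst.colL_esst hE (yf f))
  obtain ⟨s, hsW, hs0⟩ := Submodule.ne_bot_iff _ |>.1 hWess.ne_bot
  have hsker : ∀ f : S →ₗ[Rᵐᵒᵖ] M, f s = 0 := by
    intro f
    have hsA : s ∈ ⨅ f : S →ₗ[Rᵐᵒᵖ] M, LinearMap.ker f := by
      rw [← hF, Submodule.mem_iInf]
      intro g
      rw [Submodule.mem_iInf]
      intro hg
      rw [LinearMap.mem_ker, hyf g s]
      exact (hmk0 _).2 ((Submodule.mem_finsetInf.1 hsW) g hg)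
    exact (Submodule.mem_iInf _).1 hsA f
  have hsT : ∀ y : S, y * s ∈ E := by
    intro y
    have := hsker (rmul y)
    rw [hrmul] at this
    exact (hmk0 _).1 this
  let T : TwoSidedIdeal S := TwoSidedIdeal.mk' {t : S | ∀ y : S, y * t ∈ E}
    (fun y => by simpa using E.zero_mem)
    (fun ha hb y => by rw [mul_add]; exact E.add_mem (ha y) (hb y))
    (fun ha y => by rw [mul_neg]; exact E.neg_mem (ha y))
    (fun {a b} hb y => by rw [← mul_assoc]; exact hb (y * a))
    (fun {a b} ha y => by rw [← mul_assoc]; exact E.smul_mem (op b) (ha y))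
  have hmemT : ∀ t : S, t ∈ T ↔ ∀ y : S, y * t ∈ E := fun t =>
    TwoSidedIdeal.mem_mk' _ _ _ _ _ _ t
  refine ⟨T, ?_, ?_⟩
  · intro hbot
    apply hs0
    have hmem : s ∈ T := (hmemT s).2 hsT
    rw [hbot] at hmem
    exact (TwoSidedIdeal.mem_bot S).1 hmem
  · intro x hx
    have := (hmemT x).1 hx 1
    simpa using this

end Back

/-- A right noetherian ring `R` is right FBN if and only if every
finitely generated right `R`-module is an FBN module. -/
theorem rightFBN_iff_forall_fg_FBNModule
    (R : Type u) [Ring R] (hnoeth : IsNoetherianRing Rᵐᵒᵖ) :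
    RightFBN R ↔
      ∀ (M : Type u) (_ : AddCommGroup M) (_ : Module Rᵐᵒᵖ M),
        Module.Finite Rᵐᵒᵖ M → RightFBNModule R M := by
  constructor
  · rintro ⟨hn, hb⟩ P aP mP finP
    letI := aP; letI := mP; letI := finP
    constructor
    · exact isNoetherian_of_isNoetherianRing_of_finite Rᵐᵒᵖ P
    · intro M aM mM finM _hfaith
      letI := aM; letI := mM; letI := finM
      exact forward_main hnoeth hb
  · intro H
    exact ⟨hnoeth, fun P hP => backward_bounded P hP H⟩
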